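/- Let G = (V, E) be a finite connected simple graph on n vertices. Define, for each vertex v_i, matrices U_i^{(l)} ∈ ℝ^{n×n} by U_i^{(1)} = A_i^{(1)} and, for l ≥ 1, U_i^{(l+1)}[p,q] = max over v_j ∈ N_i ∪ {v_i} of U_j^{(l)}[p,q] (entrywise maximum). Then for every l ≥ 1 and every vertex v_i, U_i^{(l)} = A_i^{(l)}. -/

import Mathlib

open scoped Classical

/-- The receptive-field graph `(V, E_i^{(l)})` of node `i` after `l` message-passing
layers: `E_i^{(l)} = {(p,q) ∈ E : d(i,p) ≤ l, d(i,q) ≤ l, d(i,p) + d(i,q) < 2l}`. -/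
def recepGraph {V : Type*} (G : SimpleGraph V) (i : V) (l : ℕ) : SimpleGraph V where
  Adj p q := G.Adj p q ∧ G.dist i p ≤ l ∧ G.dist i q ≤ l ∧
    G.dist i p + G.dist i q < 2 * l
  symm := ⟨fun p q h => ⟨h.1.symm, h.2.2.1, h.2.1, by have := h.2.2.2; omega⟩⟩
  loopless := ⟨fun p h => G.loopless.irrefl p h.1⟩

lemma sup'_ite_eq {α : Type*} (s : Finset α) (hs : s.Nonempty) (P : α → Prop) :
    s.sup' hs (fun j => if P j then (1 : ℝ) else 0)
      = if ∃ j ∈ s, P j then 1 else 0 := by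
  apply le_antisymm
  · apply Finset.sup'_le
    intro j hj
    by_cases h : P j
    · simp only [h, if_true]
      rw [if_pos ⟨j, hj, h⟩]
    · simp only [h, if_false]
      split <;> norm_num
  · split
    · next h =>
      obtain ⟨j, hj, hPj⟩ := h
      calc (1 : ℝ) = if P j then (1:ℝ) else 0 := by rw [if_pos hPj]
        _ ≤ _ := Finset.le_sup' (fun j => if P j then (1:ℝ) else 0) hj
    · obtain ⟨j, hj⟩ := hs
      calc (0 : ℝ) ≤ if P j then (1:ℝ) else 0 := by split <;> norm_num
        _ ≤ _ := Finset.le_sup' (fun j => if P j then (1:ℝ) else 0) hj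

lemma exists_adj_dist_pred {n : ℕ} {G : SimpleGraph (Fin n)} (hconn : G.Connected)
    {i p : Fin n} (h : 1 ≤ G.dist i p) :
    ∃ j, G.Adj i j ∧ G.dist j p = G.dist i p - 1 := by
  obtain ⟨w, hw⟩ := (hconn i p).exists_walk_length_eq_dist
  cases w with
  | nil => simp at h
  | cons hadj w' =>
    rename_i j
    refine ⟨j, hadj, le_antisymm ?_ ?_⟩
    · have := SimpleGraph.dist_le w'
      simp [SimpleGraph.Walk.length_cons] at hw
      omega
    · have h1 : G.dist i p ≤ G.dist i j + G.dist j p := hconn.dist_triangle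
      have h2 : G.dist i j ≤ 1 := by
        have := SimpleGraph.dist_le (SimpleGraph.Walk.cons hadj SimpleGraph.Walk.nil)
        simpa using this
      omega

lemma recep_step {n : ℕ} {G : SimpleGraph (Fin n)} (hconn : G.Connected)
    {l : ℕ} (hl : 1 ≤ l) (i p q : Fin n) :
    (recepGraph G i (l + 1)).Adj p q ↔
      ∃ j ∈ insert i (G.neighborFinset i), (recepGraph G j l).Adj p q := by
  constructor
  · rintro ⟨hpq, hp, hq, hs⟩
    -- wlog-type helper
    have key : ∀ p q : Fin n, G.Adj p q → G.dist i p ≤ G.dist i q →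
        G.dist i p ≤ l + 1 → G.dist i q ≤ l + 1 →
        G.dist i p + G.dist i q < 2 * (l + 1) →
        ∃ j ∈ insert i (G.neighborFinset i), (recepGraph G j l).Adj p q := by
      intro p q hpq hle hp hq hs
      have hpl : G.dist i p ≤ l := by omega
      by_cases h0 : G.dist i p = 0
      · have hip : i = p := by
          have := (hconn i p).dist_eq_zero_iff.mp h0
          exact this
        have hq1 : G.dist i q ≤ 1 := by
          have := SimpleGraph.dist_le (SimpleGraph.Walk.cons (hip ▸ hpq) SimpleGraph.Walk.nil)
          simpa using this
        exact ⟨i, Finset.mem_insert_self _ _, hpq, by omega, by omega, by omega⟩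
      · obtain ⟨j, hadj, hjd⟩ := exists_adj_dist_pred hconn (by omega : 1 ≤ G.dist i p)
        have hjq : G.dist j q ≤ G.dist j p + G.dist p q := hconn.dist_triangle
        have hpq1 : G.dist p q ≤ 1 := by
          have := SimpleGraph.dist_le (SimpleGraph.Walk.cons hpq SimpleGraph.Walk.nil)
          simpa using this
        refine ⟨j, Finset.mem_insert_of_mem ?_, hpq, by omega, by omega, by omega⟩
        exact (G.mem_neighborFinset i j).mpr hadj
    by_cases hle : G.dist i p ≤ G.dist i q
    · exact key p q hpq hle hp hq hs
    · obtain ⟨j, hj, hadj⟩ := key q p hpq.symm (by omega) hq hp (by omega)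
      exact ⟨j, hj, hadj.symm⟩
  · rintro ⟨j, hj, hpq, hp, hq, hs⟩
    have hij : G.dist i j ≤ 1 := by
      rcases Finset.mem_insert.mp hj with h | h
      · subst h; simp [SimpleGraph.dist_self]
      · have := SimpleGraph.dist_le
          (SimpleGraph.Walk.cons ((G.mem_neighborFinset i j).mp h) SimpleGraph.Walk.nil)
        simpa using this
    have h1 : G.dist i p ≤ G.dist i j + G.dist j p := hconn.dist_triangle
    have h2 : G.dist i q ≤ G.dist i j + G.dist j q := hconn.dist_triangle
    exact ⟨hpq, by omega, by omega, by omega⟩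

/-- Lemma 2 of the paper. Starting from `U_i^{(1)} = A_i^{(1)}` and
iterating the entrywise maximum over the closed neighborhood,
`U_i^{(l+1)}[p,q] = max_{j ∈ N_i ∪ {i}} U_j^{(l)}[p,q]`, one gets `U_i^{(l)} = A_i^{(l)}`
for every `l ≥ 1` and every vertex `i`. -/
theorem max_recursion_computes_receptive_field (n : ℕ) (G : SimpleGraph (Fin n))
    (hconn : G.Connected)
    (U : ℕ → Fin n → Matrix (Fin n) (Fin n) ℝ)
    (hU1 : ∀ i, U 1 i = (recepGraph G i 1).adjMatrix ℝ)
    (hUrec : ∀ l, 1 ≤ l → ∀ i, U (l + 1) i = Matrix.of fun p q =>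
      (insert i (G.neighborFinset i)).sup'
        (Finset.insert_nonempty i (G.neighborFinset i)) (fun j => U l j p q)) :
    ∀ l, 1 ≤ l → ∀ i, U l i = (recepGraph G i l).adjMatrix ℝ := by
  intro l
  induction l with
  | zero => omega
  | succ l ih =>
    intro _ i
    rcases Nat.eq_or_lt_of_le (Nat.one_le_iff_ne_zero.mpr (Nat.succ_ne_zero l)) with h | h
    · have h0 : l = 0 := by omega
      subst h0; exact hU1 i
    · have hl : 1 ≤ l := by omega
      rw [hUrec l hl i]
      ext p q
      simp only [Matrix.of_apply]
      have : ∀ j, U l j p q = if (recepGraph G j l).Adj p q then (1:ℝ) else 0 := by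
        intro j
        rw [ih hl j]
        simp [SimpleGraph.adjMatrix_apply]
      simp only [this]
      rw [sup'_ite_eq]
      rw [SimpleGraph.adjMatrix_apply]
      congr 1
      simp only [eq_iff_iff]
      exact (recep_step hconn hl i p q).symm
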